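/- arXiv:2403.06468 — 3 statements merged into one kernel-verified Lean document; each statement's English description precedes it below -/
import Mathlib

section
/- Let R be a commutative ring with 1 and for each n ≥ 0 let u_n ∈ Λ_R be homogeneous of degree n with u_0 = 1. Then {u_n}_{n≥0} generates Λ_R as an R-algebra if and only if the Hall inner product ⟨u_n, p_n⟩ is a unit in R for every n ≥ 0. -/
open MvPolynomial

noncomputable section SymmetricFunctionCore

/-- The ring of symmetric functions over `R`, modeled as the polynomial ring
`R[h₁, h₂, …]` in the complete homogeneous symmetric functions. -/
abbrev SF (R : Type*) [CommRing R] := MvPolynomial ℕ+ R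

variable (R : Type*) [CommRing R]

/-- The complete homogeneous symmetric function `h n` (with `h 0 = 1`). -/
def hh (n : ℕ) : SF R := if h : 0 < n then X (⟨n, h⟩ : ℕ+) else 1

/-- `h_λ` for a multiset `s` of parts. -/
def hprod (s : Multiset ℕ) : SF R := (s.map (hh R)).prod

/-- `h_λ` for a partition `λ`. -/
def hOf {n : ℕ} (lam : n.Partition) : SF R := hprod R lam.parts

/-- A symmetric function is homogeneous of degree `n` when it is weighted homogeneous
for the weight assigning degree `i` to `hᵢ`. -/
def IsHomogSF (f : SF R) (n : ℕ) : Prop :=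
  IsWeightedHomogeneous (fun i : ℕ+ => (i : ℕ)) f n

/-- The power sum symmetric functions, defined from the `hᵢ` by Newton's identity
`p n = n * h n - ∑_{i=1}^{n-1} h (n - i) * p i`, with `p 0 = 1`. -/
def psum : ℕ → SF R
  | 0 => 1
  | (n+1) => (n + 1 : ℕ) • hh R (n + 1) -
      ∑ i ∈ (Finset.range n).attach, hh R (n - i) * psum (i + 1)
  termination_by n => n
  decreasing_by have := Finset.mem_range.mp i.2; omega

/-- `p_λ` for a multiset of parts. -/
def pprod (s : Multiset ℕ) : SF R := (s.map (psum R)).prod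

/-- The realization of an abstract symmetric function as an honest symmetric
polynomial in `k` variables, sending `h n` to the complete homogeneous polynomial. -/
def realize (k : ℕ) : SF R →ₐ[R] MvPolynomial (Fin k) R :=
  aeval fun n : ℕ+ => hsymm (Fin k) R (n : ℕ)

/-- The parts of a multiset, sorted in weakly decreasing order. -/
def sortedDesc (s : Multiset ℕ) : List ℕ := (s.sort (· ≤ ·)).reverse

/-- The exponent vector `x₁^{λ₁} ⋯` attached to a multiset of parts `s`, in `s.sum` variables. -/
def expOf (s : Multiset ℕ) : Fin s.sum →₀ ℕ :=
  Finsupp.equivFunOnFinite.symm fun j => (sortedDesc s).getD j 0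

/-- The coefficient of the monomial symmetric function `m_s` in a symmetric function `g`,
read off as the coefficient of the monomial `x^{s}` in a realization of `g` with
sufficiently many variables. -/
def mcoeff (s : Multiset ℕ) (g : SF R) : R :=
  coeff (expOf s) (realize R s.sum g)

/-- The multiset of parts attached to an exponent vector of a monomial in the `hᵢ`:
the monomial `∏ hᵢ^{dᵢ}` corresponds to the partition with `dᵢ` parts equal to `i`. -/
def partsOfExp (d : ℕ+ →₀ ℕ) : Multiset ℕ :=
  d.sum fun i m => Multiset.replicate m (i : ℕ)

/-- The Hall inner product on symmetric functions, determined by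
`⟨h_λ, m_μ⟩ = δ_{λμ}`: expand the first argument in the basis `h_λ` and pair with the
`m`-coefficients of the second argument. -/
def hallInner (f g : SF R) : R :=
  ∑ d ∈ f.support, f.coeff d * mcoeff R (partsOfExp d) g

variable (F : Type*) [Field F]

/-- The matrix `⟨h_λ, h_μ⟩` of the Hall pairing on the `h` basis in degree `n`. -/
def hmMatrix (n : ℕ) : Matrix (Nat.Partition n) (Nat.Partition n) F :=
  fun lam mu => mcoeff F lam.parts (hOf F mu)

/-- The monomial symmetric function `m_λ`, expanded in the `h` basis as the basis
dual to `{h_μ}` under the Hall inner product. -/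
def msym {n : ℕ} (lam : n.Partition) : SF F :=
  ∑ mu : Nat.Partition n, ((hmMatrix F n)⁻¹ lam mu) • hOf F mu


/-- `h_z` for an integer index: `0` for negative indices. -/
def hz (z : ℤ) : SF R := if 0 ≤ z then hh R z.toNat else 0

/-- The Schur function `s_λ`, defined by the Jacobi–Trudi formula
`s_λ = det (h_{λᵢ - i + j})`. -/
def schurOf {n : ℕ} (lam : n.Partition) : SF R :=
  Matrix.det (Matrix.of fun i j : Fin (sortedDesc lam.parts).length =>
    hz R (((sortedDesc lam.parts).getD i 0 : ℤ) - (i : ℤ) + (j : ℤ)))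

/-- A partition of `n` is a hook if it has the form `(a, 1^{n-a})` with `a ≥ 1`. -/
def IsHook {n : ℕ} (lam : n.Partition) : Prop :=
  ∃ a : ℕ, 1 ≤ a ∧ lam.parts = a ::ₘ Multiset.replicate (n - a) 1

/-- The sign `ε_λ = (-1)^{|λ| - ℓ(λ)}` of a permutation of cycle type `λ`. -/
def eps (s : Multiset ℕ) : ℤ := (-1) ^ (s.sum - s.card)

/-- `z_λ = ∏ᵢ i^{mᵢ} mᵢ!` where `mᵢ` is the multiplicity of `i` in `λ`. -/
def zee (s : Multiset ℕ) : ℕ :=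
  ∏ i ∈ s.toFinset, i ^ s.count i * (s.count i).factorial

/-- The total weight `w_{shape, type}` of domino tabloids of given shape and type: a
domino tabloid assigns to each row of the shape an ordered arrangement (a composition)
of dominoes filling that row, so that the multiset of all domino lengths is the type;
its weight is the product over the rows of the length of the leftmost domino. -/
def dominoW (shape ty : Multiset ℕ) : ℕ :=
  ∑ T ∈ Finset.univ.filter
      (fun T : ∀ i : Fin (sortedDesc shape).length,
          Composition ((sortedDesc shape).get i) =>
        (∑ i, ((T i).blocks : Multiset ℕ)) = ty),
    ∏ i, (T i).blocks.headI

/-- The elementary symmetric functions, defined from the `hᵢ` by the identity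
`∑_{i=0}^{n} (-1)^i e_i h_{n-i} = 0` for `n ≥ 1`. -/
def ee : ℕ → SF R
  | 0 => 1
  | (n+1) => (-1 : SF R) ^ (n + 2) *
      ∑ i ∈ (Finset.range (n + 1)).attach, (-1 : SF R) ^ (i : ℕ) * ee i * hh R (n + 1 - i)
  termination_by n => n
  decreasing_by have := Finset.mem_range.mp i.2; omega

/-- `e_λ` for a multiset of parts. -/
def eprod (s : Multiset ℕ) : SF R := (s.map (ee R)).prod

variable {F} in
/-- The skew complete homogeneous symmetric function `h_{λ/μ}`, characterized by
`⟨h_{λ/μ}, f⟩ = ⟨h_λ, h_μ f⟩`; its expansion in the `h` basis is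
`h_{λ/μ} = ∑_{ν ⊢ n} ⟨h_λ, h_μ m_ν⟩ h_ν`. -/
def hskew {m n : ℕ} (lam : Nat.Partition (m + n)) (mu : Nat.Partition m) : SF F :=
  ∑ nu : Nat.Partition n, hallInner F (hOf F lam) (hOf F mu * msym F nu) • hOf F nu

variable {F} in
/-- The skew elementary symmetric function `e_{λ/μ}`, characterized by
`⟨e_{λ/μ}, f⟩ = ⟨e_λ, e_μ f⟩`. -/
def eskew {m n : ℕ} (lam : Nat.Partition (m + n)) (mu : Nat.Partition m) : SF F :=
  ∑ nu : Nat.Partition n,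
    hallInner F (eprod F lam.parts) (eprod F mu.parts * msym F nu) • hOf F nu

variable {F} in
/-- The skew Schur function `s_{λ/μ}`, characterized by `⟨s_{λ/μ}, f⟩ = ⟨s_λ, s_μ f⟩`. -/
def sskew {m n : ℕ} (lam : Nat.Partition (m + n)) (mu : Nat.Partition m) : SF F :=
  ∑ nu : Nat.Partition n,
    hallInner F (schurOf F lam) (schurOf F mu * msym F nu) • hOf F nu

/-- The `i`-th part (`0`-indexed) of a partition, `0` if `i` exceeds the length. -/
def rowOf {n : ℕ} (lam : n.Partition) (i : ℕ) : ℕ := (sortedDesc lam.parts).getD i 0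

/-- The set of cells of the skew diagram `λ/μ`. -/
def skewCells {m n : ℕ} (lam : Nat.Partition (m + n)) (mu : Nat.Partition m) :
    Set (ℕ × ℕ) :=
  {c | rowOf mu c.1 ≤ c.2 ∧ c.2 < rowOf lam c.1}

/-- Two cells are adjacent when they share an edge. -/
def CellAdj (c c' : ℕ × ℕ) : Prop :=
  (c.1 = c'.1 ∧ (c.2 = c'.2 + 1 ∨ c'.2 = c.2 + 1)) ∨
  (c.2 = c'.2 ∧ (c.1 = c'.1 + 1 ∨ c'.1 = c.1 + 1))

/-- `λ/μ` is a ribbon (border strip): `μ ⊆ λ`, the skew diagram is nonempty,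
edgewise connected, and contains no `2 × 2` block of cells. -/
def IsRibbon {m n : ℕ} (lam : Nat.Partition (m + n)) (mu : Nat.Partition m) : Prop :=
  (∀ i, rowOf mu i ≤ rowOf lam i) ∧
  (skewCells lam mu).Nonempty ∧
  (∀ c ∈ skewCells lam mu, ∀ c' ∈ skewCells lam mu,
    Relation.ReflTransGen (fun a b => CellAdj a b ∧ b ∈ skewCells lam mu) c c') ∧
  ¬∃ i j : ℕ, (i, j) ∈ skewCells lam mu ∧ (i + 1, j) ∈ skewCells lam mu ∧
      (i, j + 1) ∈ skewCells lam mu ∧ (i + 1, j + 1) ∈ skewCells lam mu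

variable {F} in
/-- The algebra endomorphism of `Λ` sending `p_k ↦ p_k / (1 - t^k)`, written on the
generators `h_n = ∑_{λ ⊢ n} z_λ⁻¹ p_λ`. -/
def thetaT (t : F) : SF F →ₐ[F] SF F :=
  aeval fun i : ℕ+ =>
    ∑ lam : Nat.Partition (i : ℕ),
      ((zee lam.parts : F)⁻¹ * (lam.parts.map fun a => (1 - t ^ a)⁻¹).prod) •
        pprod F lam.parts

variable {F} in
/-- The `t`-deformed Hall inner product, `⟨p_λ, p_μ⟩_t = δ_{λμ} z_λ ∏ᵢ (1 - t^{λᵢ})⁻¹`,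
expressed via the ordinary Hall product as `⟨f, g⟩_t = ⟨Θ_t f, g⟩`. -/
def hallT (t : F) (f g : SF F) : F := hallInner F (thetaT t f) g

/-- `μ` is dominated by `λ`: partial sums of `μ` are at most those of `λ`. -/
def Dominated {n : ℕ} (mu lam : n.Partition) : Prop :=
  ∀ k : ℕ, ((sortedDesc mu.parts).take k).sum ≤ ((sortedDesc lam.parts).take k).sum

/-- `n(λ) = ∑ᵢ (i - 1) λᵢ`. -/
def nInv (s : Multiset ℕ) : ℕ :=
  ∑ i ∈ Finset.range (sortedDesc s).length, i * (sortedDesc s).getD i 0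

variable {F} in
/-- `φ_r(t) = (1 - t)(1 - t²) ⋯ (1 - t^r)`. -/
def phi (r : ℕ) (t : F) : F := ∏ j ∈ Finset.range r, (1 - t ^ (j + 1))

variable {F} in
open scoped Classical in
/-- A family `P` of symmetric functions indexed by partitions is the family of
Hall–Littlewood symmetric functions `P_λ(x; t)` if each `P_λ` is `m_λ` plus a linear
combination of `m_μ` for `μ` strictly dominated by `λ`, and distinct members are
orthogonal for the `t`-inner product. -/
def IsHallLittlewoodP (t : F) (P : ∀ n : ℕ, Nat.Partition n → SF F) : Prop :=
  (∀ n (lam : Nat.Partition n), ∃ c : Nat.Partition n → F,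
    P n lam = msym F lam +
      ∑ mu ∈ Finset.univ.filter fun mu => mu ≠ lam ∧ Dominated mu lam,
        c mu • msym F mu) ∧
  ∀ n (lam mu : Nat.Partition n), lam ≠ mu → hallT t (P n lam) (P n mu) = 0

variable {F} in
/-- The `Q`-Hall–Littlewood function `Q_λ = (∏ᵢ φ_{mᵢ(λ)}(t)) P_λ`. -/
def QofP (t : F) (P : ∀ n : ℕ, Nat.Partition n → SF F) {n : ℕ}
    (lam : Nat.Partition n) : SF F :=
  (∏ i ∈ lam.parts.toFinset, phi (lam.parts.count i) t) • P n lam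

end SymmetricFunctionCore

section Aux

open Finset

namespace SFAux

variable {σ : Type*} [Fintype σ] [DecidableEq σ]

private noncomputable def mon (R : Type*) [CommRing R] (m : Multiset σ) :
    MvPolynomial σ R := (m.map X).prod

omit [Fintype σ] [DecidableEq σ] in
private lemma mon_add (R : Type*) [CommRing R] (m m' : Multiset σ) :
    mon R (m + m') = mon R m * mon R m' := by
  simp [mon]

omit [Fintype σ] [DecidableEq σ] in
private lemma mon_replicate (R : Type*) [CommRing R] (j : ℕ) (x : σ) :
    mon R (Multiset.replicate j x) = X x ^ j := by
  simp [mon, Multiset.map_replicate, Multiset.prod_replicate]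

private lemma inner_fiber {N : ℕ} (j : ℕ) (x : σ) (b : Multiset σ)
    (hbN : Multiset.card b = N) :
    ∑ μ : Sym σ (N - j), (if (μ : Multiset σ) + Multiset.replicate j x = b then 1 else 0)
      = if j ≤ b.count x then 1 else 0 := by
  by_cases h : j ≤ b.count x
  · have hle : Multiset.replicate j x ≤ b := Multiset.le_count_iff_replicate_le.mp h
    have hcard : Multiset.card (b - Multiset.replicate j x) = N - j := by
      rw [Multiset.card_sub hle, Multiset.card_replicate, hbN]
    set μ0 : Sym σ (N - j) := ⟨b - Multiset.replicate j x, hcard⟩ with hμ0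
    have hcond : ∀ μ : Sym σ (N - j),
        ((μ : Multiset σ) + Multiset.replicate j x = b) ↔ μ = μ0 := by
      intro μ
      constructor
      · intro he
        apply Sym.coe_injective
        simp only [hμ0]
        exact eq_tsub_of_add_eq he
      · rintro rfl
        simp only [hμ0]
        exact tsub_add_cancel_of_le hle
    simp only [hcond]
    rw [Finset.sum_ite_eq' Finset.univ μ0 (fun _ => (1 : ℕ))]
    simp [h]
  · have hnone : ∀ μ : Sym σ (N - j),
        ¬((μ : Multiset σ) + Multiset.replicate j x = b) := by
      intro μ he
      apply h
      apply Multiset.le_count_iff_replicate_le.mpr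
      rw [← he]; exact Multiset.le_add_left _ _
    simp only [hnone, if_false, Finset.sum_const_zero, if_neg h]

lemma newton_h (R : Type*) [CommRing R] (N : ℕ) (hN : 1 ≤ N) :
    ∑ j ∈ Finset.Icc 1 N, MvPolynomial.hsymm σ R (N - j) * MvPolynomial.psum σ R j
      = N • MvPolynomial.hsymm σ R N := by
  classical
  have hterm : ∀ j ∈ Finset.Icc 1 N,
      MvPolynomial.hsymm σ R (N - j) * MvPolynomial.psum σ R j
        = ∑ p : Sym σ (N - j) × σ, mon R (p.1.1 + Multiset.replicate j p.2) := by
    intro j hj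
    rw [Fintype.sum_prod_type, MvPolynomial.hsymm, MvPolynomial.psum, Finset.sum_mul_sum]
    refine Finset.sum_congr rfl fun μ _ => Finset.sum_congr rfl fun x _ => ?_
    rw [mon_add, mon_replicate, mon]
  rw [Finset.sum_congr rfl hterm]
  rw [← Finset.sum_sigma (Finset.Icc 1 N) (fun j => (Finset.univ : Finset (Sym σ (N - j) × σ)))
    (fun t => mon R (t.2.1.1 + Multiset.replicate t.1 t.2.2))]
  set T := (Finset.Icc 1 N).sigma
      (fun j => (Finset.univ : Finset (Sym σ (N - j) × σ))) with hT
  set g : (Σ j : ℕ, Sym σ (N - j) × σ) → Multiset σ :=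
      fun t => t.2.1.1 + Multiset.replicate t.1 t.2.2 with hg
  have hcomp : ∑ t ∈ T, mon R (g t) = ∑ b ∈ T.image g, #{t ∈ T | g t = b} • mon R b :=
    Finset.sum_comp (mon R) g
  rw [hcomp]
  have hcardg : ∀ t ∈ T, Multiset.card (g t) = N := by
    intro t ht
    have h1 : t.1 ∈ Finset.Icc 1 N := (Finset.mem_sigma.mp ht).1
    rw [Finset.mem_Icc] at h1
    have h2 : Multiset.card t.snd.1.1 = N - t.1 := t.snd.1.prop
    simp only [hg, Multiset.card_add, Multiset.card_replicate, h2]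
    omega
  have himage : T.image g = (Finset.univ : Finset (Sym σ N)).image Sym.toMultiset := by
    ext b
    simp only [Finset.mem_image, Finset.mem_univ, true_and]
    constructor
    · rintro ⟨t, ht, rfl⟩
      exact ⟨⟨g t, hcardg t ht⟩, rfl⟩
    · rintro ⟨ν, rfl⟩
      have hpos : 0 < Multiset.card (ν : Multiset σ) := by
        rw [Sym.card_coe]; omega
      obtain ⟨x, hx⟩ := Multiset.card_pos_iff_exists_mem.mp hpos
      have hcard : Multiset.card ((ν : Multiset σ).erase x) = N - 1 := by
        rw [Multiset.card_erase_of_mem hx, Sym.card_coe]; rfl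
      refine ⟨⟨1, ⟨⟨(ν : Multiset σ).erase x, hcard⟩, x⟩⟩, ?_, ?_⟩
      · exact Finset.mem_sigma.mpr ⟨Finset.mem_Icc.mpr ⟨le_refl 1, hN⟩, Finset.mem_univ _⟩
      · simp only [hg, Multiset.replicate_one]
        show (ν : Multiset σ).erase x + {x} = (ν : Multiset σ)
        rw [add_comm, Multiset.singleton_add, Multiset.cons_erase hx]
  have hfiber : ∀ b ∈ T.image g, #{t ∈ T | g t = b} = N := by
    intro b hb
    have hbN : Multiset.card b = N := by
      rw [himage] at hb
      obtain ⟨ν, -, rfl⟩ := Finset.mem_image.mp hb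
      exact ν.2
    rw [Finset.card_filter, Finset.sum_sigma]
    have step : ∀ j ∈ Finset.Icc 1 N,
        (∑ p ∈ (Finset.univ : Finset (Sym σ (N - j) × σ)),
          if g ⟨j, p⟩ = b then 1 else 0) = ∑ x : σ, if j ≤ b.count x then 1 else 0 := by
      intro j hj
      rw [Finset.mem_Icc] at hj
      rw [Fintype.sum_prod_type, Finset.sum_comm]
      exact Finset.sum_congr rfl fun x _ => inner_fiber j x b hbN
    rw [Finset.sum_congr rfl step, Finset.sum_comm]
    have hx : ∀ x : σ, (∑ j ∈ Finset.Icc 1 N, if j ≤ b.count x then 1 else 0)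
        = b.count x := by
      intro x
      have hcle : b.count x ≤ N := by
        rw [← hbN]; exact Multiset.count_le_card x b
      rw [← Finset.sum_filter]
      have hfil : Finset.filter (fun j => j ≤ b.count x) (Finset.Icc 1 N)
          = Finset.Icc 1 (b.count x) := by
        ext j
        simp only [Finset.mem_filter, Finset.mem_Icc]
        omega
      rw [hfil]
      simp [Nat.card_Icc]
    rw [Finset.sum_congr rfl fun x _ => hx x, ← hbN,
      ← Multiset.toFinset_sum_count_eq b]
    refine (Finset.sum_subset (Finset.subset_univ _) ?_).symm
    intro x _ hx2
    exact Multiset.count_eq_zero_of_notMem fun hmem =>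
      hx2 (Multiset.mem_toFinset.mpr hmem)
  rw [Finset.sum_congr rfl fun b hb => by rw [hfiber b hb]]
  rw [himage, Finset.sum_image (fun ν _ μ _ h => Sym.coe_injective h)]
  rw [MvPolynomial.hsymm, Finset.smul_sum]
  rfl

end SFAux


namespace SFAux

variable {R : Type*} [CommRing R]

lemma realize_hh (R : Type*) [CommRing R] (k m : ℕ) :
    realize R k (hh R m) = MvPolynomial.hsymm (Fin k) R m := by
  rcases Nat.eq_zero_or_pos m with hm | hm
  · subst hm
    simp [hh, realize, MvPolynomial.hsymm_zero]
  · simp only [hh, dif_pos hm, realize, MvPolynomial.aeval_X]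
    exact MvPolynomial.aeval_X _ _

lemma realize_psum (R : Type*) [CommRing R] (k n : ℕ) (hn : 1 ≤ n) :
    realize R k (_root_.psum R n) = MvPolynomial.psum (Fin k) R n := by
  induction n using Nat.strong_induction_on with
  | _ n IH =>
    match n, hn with
    | (m + 1), _ =>
      rw [_root_.psum]
      rw [map_sub, map_nsmul, map_sum, realize_hh]
      have hterm : ∀ i ∈ (Finset.range m).attach,
          realize R k (hh R (m - ↑i) * _root_.psum R (↑i + 1))
            = MvPolynomial.hsymm (Fin k) R (m - ↑i) * MvPolynomial.psum (Fin k) R (↑i + 1) := by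
        intro i _
        have hi := Finset.mem_range.mp i.2
        rw [map_mul, realize_hh, IH (↑i + 1) (by omega) (by omega)]
      rw [Finset.sum_congr rfl hterm]
      have hnewton := newton_h (σ := Fin k) R (m + 1) (by omega)
      rw [← Finset.Ico_add_one_right_eq_Icc, Finset.sum_Ico_eq_sum_range] at hnewton
      simp only [show m + 1 + 1 - 1 = m + 1 from rfl] at hnewton
      rw [Finset.sum_range_succ] at hnewton
      have hsimp : ∀ i ∈ Finset.range m,
          MvPolynomial.hsymm (Fin k) R (m + 1 - (1 + i)) * MvPolynomial.psum (Fin k) R (1 + i)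
            = MvPolynomial.hsymm (Fin k) R (m - i) * MvPolynomial.psum (Fin k) R (i + 1) := by
        intro i _
        congr 1
        · congr 1
          omega
        · congr 1
          omega
      rw [Finset.sum_congr rfl hsimp] at hnewton
      have htop : MvPolynomial.hsymm (Fin k) R (m + 1 - (1 + m)) * MvPolynomial.psum (Fin k) R (1 + m)
          = MvPolynomial.psum (Fin k) R (m + 1) := by
        have : m + 1 - (1 + m) = 0 := by omega
        rw [this, MvPolynomial.hsymm_zero, one_mul, add_comm]
      rw [htop] at hnewton
      rw [Finset.sum_attach (Finset.range m)
        (fun i => MvPolynomial.hsymm (Fin k) R (m - i) * MvPolynomial.psum (Fin k) R (i + 1))]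
      rw [← hnewton]
      ring

end SFAux


namespace SFAux

lemma sortedDesc_length (s : Multiset ℕ) : (sortedDesc s).length = Multiset.card s := by
  simp [sortedDesc]

lemma sortedDesc_getD_mem (s : Multiset ℕ) {j : ℕ} (hj : j < Multiset.card s) :
    (sortedDesc s).getD j 0 ∈ s := by
  have hlen : j < (sortedDesc s).length := by rw [sortedDesc_length]; exact hj
  rw [List.getD_eq_getElem _ _ hlen]
  have hmem := List.getElem_mem hlen
  simp only [sortedDesc, List.mem_reverse, Multiset.mem_sort] at hmem
  exact hmem

lemma card_le_sum' {s : Multiset ℕ} (hpos : ∀ a ∈ s, 1 ≤ a) :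
    Multiset.card s ≤ s.sum := by
  induction s using Multiset.induction with
  | empty => simp
  | cons a t IH =>
    simp only [Multiset.card_cons, Multiset.sum_cons]
    have h1 := hpos a (Multiset.mem_cons_self a t)
    have h2 := IH fun b hb => hpos b (Multiset.mem_cons_of_mem hb)
    omega

lemma expOf_apply (s : Multiset ℕ) (j : Fin s.sum) :
    expOf s j = (sortedDesc s).getD j 0 := rfl

lemma expOf_eq_single_iff (s : Multiset ℕ) (hpos : ∀ a ∈ s, 1 ≤ a) (hs : 1 ≤ s.sum)
    (i : Fin s.sum) :
    Finsupp.single i s.sum = expOf s ↔ s = {s.sum} ∧ (i : ℕ) = 0 := by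
  have h0lt : (0 : ℕ) < s.sum := hs
  constructor
  · intro h
    have happ : ∀ (m : ℕ) (hm : m < s.sum),
        (if i = (⟨m, hm⟩ : Fin s.sum) then s.sum else 0) = (sortedDesc s).getD m 0 := by
      intro m hm
      have h2 : Finsupp.single i s.sum ⟨m, hm⟩ = expOf s ⟨m, hm⟩ := by rw [h]
      rw [Finsupp.single_apply] at h2
      exact h2
    have hcard0 : Multiset.card s ≠ 0 := by
      intro h0
      rw [Multiset.card_eq_zero] at h0
      subst h0
      simp at hs
    have hcle := card_le_sum' hpos
    have hcard1 : Multiset.card s = 1 := by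
      by_contra hc
      have h2 : 2 ≤ Multiset.card s := by omega
      have h1lt : (1 : ℕ) < s.sum := lt_of_lt_of_le h2 hcle
      have hv0 : 1 ≤ (sortedDesc s).getD 0 0 :=
        hpos _ (sortedDesc_getD_mem s (by omega))
      have hv1 : 1 ≤ (sortedDesc s).getD 1 0 :=
        hpos _ (sortedDesc_getD_mem s (by omega))
      have e0 := happ 0 h0lt
      have e1 := happ 1 h1lt
      by_cases hi : i = ⟨0, h0lt⟩
      · rw [if_neg (by simp [hi, Fin.ext_iff])] at e1
        omega
      · rw [if_neg hi] at e0
        omega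
    obtain ⟨a, ha⟩ := Multiset.card_eq_one.mp hcard1
    have hasum : s.sum = a := by rw [ha]; simp
    have hseq : s = {s.sum} := by rw [hasum, ha]
    refine ⟨hseq, ?_⟩
    have e0 := happ 0 h0lt
    have hval0 : (sortedDesc s).getD 0 0 ∈ s := sortedDesc_getD_mem s (by omega)
    have hv0 : 1 ≤ (sortedDesc s).getD 0 0 := hpos _ hval0
    by_cases hi : i = ⟨0, h0lt⟩
    · simp [hi]
    · rw [if_neg hi] at e0
      omega
  · rintro ⟨hseq, hi⟩
    have hsort : sortedDesc s = [s.sum] := by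
      conv_lhs => rw [hseq]
      simp [sortedDesc]
    ext j
    rw [expOf_apply, hsort, Finsupp.single_apply]
    rcases Nat.eq_zero_or_pos (j : ℕ) with hj | hj
    · rw [if_pos (Fin.ext (by omega)), hj]
      rfl
    · rw [if_neg (by simp [Fin.ext_iff]; omega)]
      rw [List.getD_eq_default]
      simp; omega

lemma mcoeff_psum (R : Type*) [CommRing R] (s : Multiset ℕ)
    (hpos : ∀ a ∈ s, 1 ≤ a) (hs : 1 ≤ s.sum) :
    mcoeff R s (_root_.psum R s.sum) = if s = {s.sum} then 1 else 0 := by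
  rw [mcoeff, realize_psum R s.sum s.sum hs, MvPolynomial.psum, MvPolynomial.coeff_sum]
  simp_rw [MvPolynomial.coeff_X_pow]
  by_cases hcase : s = {s.sum}
  · rw [if_pos hcase]
    have hcond : ∀ i : Fin s.sum,
        (Finsupp.single i s.sum = expOf s) = (i = (⟨0, hs⟩ : Fin s.sum)) := by
      intro i
      rw [eq_iff_iff, expOf_eq_single_iff s hpos hs i]
      constructor
      · rintro ⟨-, h2⟩
        exact Fin.ext (by simpa using h2)
      · rintro rfl
        exact ⟨hcase, rfl⟩
    simp_rw [hcond]
    rw [Finset.sum_ite_eq' Finset.univ (⟨0, hs⟩ : Fin s.sum) (fun _ => (1 : R))]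
    simp
  · rw [if_neg hcase]
    have hnone : ∀ i : Fin s.sum, ¬(Finsupp.single i s.sum = expOf s) := by
      intro i hc
      exact hcase ((expOf_eq_single_iff s hpos hs i).mp hc).1
    simp [hnone]

private def cardHom : Multiset ℕ →+ ℕ := ⟨⟨Multiset.card, Multiset.card_zero⟩, Multiset.card_add⟩

lemma partsOfExp_sum (d : ℕ+ →₀ ℕ) :
    (partsOfExp d).sum = (Finsupp.weight fun i : ℕ+ => (i : ℕ)) d := by
  rw [partsOfExp, Finsupp.weight_apply, Finsupp.sum, Finsupp.sum]
  rw [show (Multiset.sum : Multiset ℕ → ℕ) = Multiset.sumAddMonoidHom from rfl]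
  rw [map_sum]
  refine Finset.sum_congr rfl fun i _ => ?_
  simp [Multiset.sum_replicate]

lemma partsOfExp_card (d : ℕ+ →₀ ℕ) :
    Multiset.card (partsOfExp d) = ∑ i ∈ d.support, d i := by
  rw [partsOfExp, Finsupp.sum]
  rw [show (Multiset.card : Multiset ℕ → ℕ) = cardHom from rfl]
  rw [map_sum]
  refine Finset.sum_congr rfl fun i _ => ?_
  simp [cardHom]

lemma partsOfExp_pos (d : ℕ+ →₀ ℕ) : ∀ a ∈ partsOfExp d, 1 ≤ a := by
  intro a ha
  rw [partsOfExp, Finsupp.sum] at ha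
  obtain ⟨i, -, hai⟩ := Multiset.mem_sum.mp ha
  rw [Multiset.eq_of_mem_replicate hai]
  exact i.2

lemma partsOfExp_eq_singleton_iff (d : ℕ+ →₀ ℕ) (n : ℕ) (hn : 0 < n) :
    partsOfExp d = {n} ↔ d = Finsupp.single (⟨n, hn⟩ : ℕ+) 1 := by
  constructor
  · intro h
    have hcard : (∑ i ∈ d.support, d i) = 1 := by
      rw [← partsOfExp_card, h]
      simp
    have hne : d.support.Nonempty := by
      rcases Finset.eq_empty_or_nonempty d.support with h0 | h0
      · rw [h0] at hcard
        simp at hcard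
      · exact h0
    have hcle : d.support.card ≤ ∑ i ∈ d.support, d i := by
      calc d.support.card = ∑ _i ∈ d.support, 1 := by simp
      _ ≤ ∑ i ∈ d.support, d i := Finset.sum_le_sum fun i hi =>
          Nat.one_le_iff_ne_zero.mpr (Finsupp.mem_support_iff.mp hi)
    have hc1 : d.support.card = 1 := le_antisymm (by omega) (Finset.Nonempty.card_pos hne)
    obtain ⟨j, hj⟩ := Finset.card_eq_one.mp hc1
    have hdj : d j = 1 := by
      rw [hj] at hcard
      simpa using hcard
    have hd : d = Finsupp.single j (d j) := (Finsupp.support_eq_singleton.mp hj).2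
    rw [hdj] at hd
    have hjn : (j : ℕ) = n := by
      rw [hd, partsOfExp, Finsupp.sum_single_index (by simp)] at h
      simpa [Multiset.replicate_one] using h
    have : j = (⟨n, hn⟩ : ℕ+) := by
      apply PNat.coe_injective
      simpa using hjn
    rw [hd, this]; rfl
  · rintro rfl
    erw [partsOfExp, Finsupp.sum_single_index (by simp)]
    simp [Multiset.replicate_one]

lemma hallInner_psum (R : Type*) [CommRing R] (f : SF R) (n : ℕ) (hn : 0 < n)
    (hf : IsHomogSF R f n) :
    hallInner R f (_root_.psum R n)
      = MvPolynomial.coeff (Finsupp.single (⟨n, hn⟩ : ℕ+) 1) f := by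
  classical
  rw [hallInner]
  have hterm : ∀ d ∈ f.support,
      MvPolynomial.coeff d f * mcoeff R (partsOfExp d) (_root_.psum R n)
        = if d = Finsupp.single (⟨n, hn⟩ : ℕ+) 1 then MvPolynomial.coeff d f else 0 := by
    intro d hd
    have hw : (Finsupp.weight fun i : ℕ+ => (i : ℕ)) d = n :=
      hf (MvPolynomial.mem_support_iff.mp hd)
    have hsum : (partsOfExp d).sum = n := by rw [partsOfExp_sum, hw]
    have h1 := mcoeff_psum R (partsOfExp d) (partsOfExp_pos d) (by omega)
    rw [hsum] at h1
    rw [h1]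
    simp only [partsOfExp_eq_singleton_iff d n hn]
    rw [mul_ite, mul_one, mul_zero]
  erw [Finset.sum_congr rfl hterm]; refine (Eq.trans (by congr!) (Finset.sum_ite_eq' f.support (Finsupp.single (⟨n, hn⟩ : ℕ+) 1) (fun d => MvPolynomial.coeff d f))).trans ?_
  by_cases hmem : Finsupp.single (⟨n, hn⟩ : ℕ+) 1 ∈ f.support
  · erw [if_pos hmem]; rfl
  · erw [if_neg hmem, (MvPolynomial.notMem_support_iff.mp hmem)]

end SFAux


namespace SFAux

open MvPolynomial

lemma hallInner_one_one (R : Type*) [CommRing R] [Nontrivial R] :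
    hallInner R (1 : SF R) (1 : SF R) = 1 := by
  classical
  rw [hallInner]
  have hsupp : (1 : SF R).support = {0} := by
    rw [← MvPolynomial.C_1, MvPolynomial.C_apply, MvPolynomial.support_monomial]
    simp
  rw [hsupp, Finset.sum_singleton]
  have h1 : partsOfExp (0 : ℕ+ →₀ ℕ) = 0 := by
    rw [partsOfExp, Finsupp.sum_zero_index]
  rw [h1]
  have h2 : mcoeff R (0 : Multiset ℕ) (1 : SF R) = 1 := by
    rw [mcoeff, map_one]
    have h3 : expOf (0 : Multiset ℕ) = 0 := by
      ext j
      exact absurd j.2 (by simp)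
    rw [h3, ← MvPolynomial.C_1, MvPolynomial.coeff_C]
    exact if_pos rfl
  rw [h2]
  simp

lemma weight_le_of_mem_support {d : ℕ+ →₀ ℕ} {n : ℕ}
    (hw : (Finsupp.weight fun i : ℕ+ => (i : ℕ)) d = n) {j : ℕ+} (hj : j ∈ d.support) :
    (j : ℕ) ≤ n := by
  have hsum : ∑ i ∈ d.support, d i * (i : ℕ) = n := by
    rw [← hw, Finsupp.weight_apply, Finsupp.sum]
    exact Finset.sum_congr rfl fun i _ => by rw [smul_eq_mul]
  have hj1 : 1 ≤ d j := Nat.one_le_iff_ne_zero.mpr (Finsupp.mem_support_iff.mp hj)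
  have hterm : d j * (j : ℕ) ≤ n := by
    rw [← hsum]
    exact Finset.single_le_sum (f := fun i => d i * (i : ℕ)) (fun i _ => Nat.zero_le _) hj
  calc (j : ℕ) = 1 * (j : ℕ) := (one_mul _).symm
  _ ≤ d j * (j : ℕ) := Nat.mul_le_mul_right _ hj1
  _ ≤ n := hterm

lemma eq_single_of_weight_eq {d : ℕ+ →₀ ℕ} {n : ℕ}
    (hw : (Finsupp.weight fun i : ℕ+ => (i : ℕ)) d = n) {j : ℕ+} (hj : j ∈ d.support)
    (hjn : (j : ℕ) = n) : d = Finsupp.single j 1 := by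
  have hsum : ∑ i ∈ d.support, d i * (i : ℕ) = n := by
    rw [← hw, Finsupp.weight_apply, Finsupp.sum]
    exact Finset.sum_congr rfl fun i _ => by rw [smul_eq_mul]
  have hj1 : 1 ≤ d j := Nat.one_le_iff_ne_zero.mpr (Finsupp.mem_support_iff.mp hj)
  have hjpos : 0 < (j : ℕ) := j.2
  have hsplit : d j * (j : ℕ) + ∑ i ∈ d.support.erase j, d i * (i : ℕ) = n := by
    rw [Finset.add_sum_erase _ (fun i => d i * (i : ℕ)) hj]
    exact hsum
  have hdj2 : d j < 2 := by
    by_contra h2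
    have h3 : 2 * (j : ℕ) ≤ d j * (j : ℕ) := Nat.mul_le_mul_right _ (by omega)
    omega
  have hdj : d j = 1 := by omega
  have hrest : ∑ i ∈ d.support.erase j, d i * (i : ℕ) = 0 := by
    rw [hdj, one_mul, hjn] at hsplit
    omega
  have hsupp : d.support = {j} := by
    apply Finset.eq_singleton_iff_unique_mem.mpr
    refine ⟨hj, fun i hi => ?_⟩
    by_contra hne
    have hi' : i ∈ d.support.erase j := Finset.mem_erase.mpr ⟨hne, hi⟩
    have hzero := (Finset.sum_eq_zero_iff.mp hrest) i hi'
    have hipos : 0 < d i * (i : ℕ) :=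
      Nat.mul_pos (Nat.pos_of_ne_zero (Finsupp.mem_support_iff.mp hi)) i.2
    omega
  have hd := (Finsupp.support_eq_singleton.mp hsupp).2
  rw [hdj] at hd
  exact hd

lemma aeval_single_sq_zero {R A : Type*} [CommRing R] [CommRing A] [Algebra R A]
    (n : ℕ+) (a : A) (ha : a * a = 0) (f : SF R) :
    MvPolynomial.aeval (fun i : ℕ+ => if i = n then a else 0) f
      = algebraMap R A (MvPolynomial.coeff 0 f)
        + MvPolynomial.coeff (Finsupp.single n 1) f • a := by
  conv_lhs => rw [f.as_sum]
  rw [map_sum]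
  have hterm : ∀ d ∈ f.support,
      MvPolynomial.aeval (fun i : ℕ+ => if i = n then a else 0)
          (MvPolynomial.monomial d (MvPolynomial.coeff d f))
        = (if d = 0 then algebraMap R A (MvPolynomial.coeff d f) else 0)
          + (if d = Finsupp.single n 1 then MvPolynomial.coeff d f • a else 0) := by
    intro d _
    rw [MvPolynomial.aeval_monomial]
    by_cases h0 : d = 0
    · subst h0
      rw [if_pos rfl, if_neg (by
        intro hcon
        exact one_ne_zero ((Finsupp.single_eq_zero).mp hcon.symm))]
      simp
    · rw [if_neg h0]
      by_cases h1 : d = Finsupp.single n 1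
      · subst h1
        rw [if_pos rfl, Finsupp.prod_single_index (by simp)]
        rw [if_pos rfl, pow_one, Algebra.smul_def, zero_add]
      · rw [if_neg h1, add_zero]
        by_cases hsub : d.support ⊆ {n}
        · have hd : d = Finsupp.single n (d n) := by
            ext i
            rw [Finsupp.single_apply]
            by_cases hin : n = i
            · subst hin; simp
            · rw [if_neg hin]
              by_contra hne
              have hmem : i ∈ d.support := Finsupp.mem_support_iff.mpr hne
              have hmem2 := hsub hmem
              rw [Finset.mem_singleton] at hmem2
              exact hin hmem2.symm
          have hk2 : 2 ≤ d n := by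
            by_contra hk
            have hk' : d n = 0 ∨ d n = 1 := by omega
            rcases hk' with hk' | hk'
            · apply h0
              rw [hd, hk', Finsupp.single_zero]
            · apply h1
              rw [hd, hk']
          rw [hd, Finsupp.prod_single_index (by simp), if_pos rfl]
          have hz : a ^ d n = 0 := by
            rw [show d n = d n - 2 + 2 from by omega, pow_add, pow_two, ha, mul_zero]
          rw [hz, mul_zero]
        · obtain ⟨i, hi, hin⟩ : ∃ i ∈ d.support, i ≠ n := by
            rcases Finset.not_subset.mp hsub with ⟨i, hi, hin⟩
            exact ⟨i, hi, by simpa using hin⟩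
          rw [Finsupp.prod]
          rw [Finset.prod_eq_zero hi (by
            rw [if_neg hin]
            exact zero_pow (Finsupp.mem_support_iff.mp hi))]
          rw [mul_zero]
  rw [Finset.sum_congr rfl hterm, Finset.sum_add_distrib]
  congr 1
  · rw [Finset.sum_ite_eq' f.support 0 (fun d => algebraMap R A (MvPolynomial.coeff d f))]
    by_cases h : (0 : ℕ+ →₀ ℕ) ∈ f.support
    · rw [if_pos h]
    · rw [if_neg h, MvPolynomial.notMem_support_iff.mp h, map_zero]
  · rw [Finset.sum_ite_eq' f.support (Finsupp.single n 1)
      (fun d => MvPolynomial.coeff d f • a)]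
    by_cases h : Finsupp.single n 1 ∈ f.support
    · rw [if_pos h]
    · rw [if_neg h, MvPolynomial.notMem_support_iff.mp h, zero_smul]

end SFAux

end Aux

/-- For `u n` homogeneous of degree `n` with `u 0 = 1`, the family
`{u n}` generates `Λ_R` as an `R`-algebra iff `⟨u n, p n⟩` is a unit in `R` for all `n`. -/
theorem stmt2 (R : Type*) [CommRing R] (u : ℕ → SF R) (hu0 : u 0 = 1)
    (hhom : ∀ n, IsHomogSF R (u n) n) :
    Algebra.adjoin R (Set.range u) = ⊤ ↔
      ∀ n : ℕ, IsUnit (hallInner R (u n) (psum R n)) := by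
  classical
  constructor
  · intro hgen n
    rcases Nat.eq_zero_or_pos n with rfl | hn
    · rcases subsingleton_or_nontrivial R with hR | hR
      · exact isUnit_of_subsingleton _
      · rw [hu0, show _root_.psum R 0 = 1 from by rw [_root_.psum],
          SFAux.hallInner_one_one R]
        exact isUnit_one
    · rw [SFAux.hallInner_psum R (u n) n hn (hhom n)]
      by_contra hc
      obtain ⟨M, hM, hcM⟩ := exists_max_ideal_of_mem_nonunits hc
      haveI := hM
      set A := DualNumber (R ⧸ M) with hA
      set ψ : SF R →ₐ[R] A :=
        MvPolynomial.aeval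
          (fun i : ℕ+ => if i = (⟨n, hn⟩ : ℕ+) then (DualNumber.eps : A) else 0) with hψ
      have hwsingle : (Finsupp.weight fun i : ℕ+ => (i : ℕ))
          (Finsupp.single (⟨n, hn⟩ : ℕ+) 1) = n := by
        erw [Finsupp.weight_apply, Finsupp.sum_single_index (by simp)]
        simp
      have himg : ∀ m : ℕ, ψ (u m) ∈ (⊥ : Subalgebra R A) := by
        intro m
        rcases Nat.eq_zero_or_pos m with rfl | hm
        · rw [hu0, map_one]
          exact Subalgebra.one_mem _
        · have heval := SFAux.aeval_single_sq_zero (R := R) (A := A) ⟨n, hn⟩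
            DualNumber.eps DualNumber.eps_mul_eps (u m)
          have hc0 : MvPolynomial.coeff 0 (u m) = 0 := by
            by_contra h0
            have hw := hhom m h0
            rw [map_zero] at hw
            omega
          have hψum : ψ (u m) = MvPolynomial.coeff
              (Finsupp.single (⟨n, hn⟩ : ℕ+) 1) (u m) • (DualNumber.eps : A) := by
            rw [hψ]
            show MvPolynomial.aeval _ (u m) = _
            refine (Eq.trans (by congr!) heval).trans ?_; erw [hc0, map_zero, zero_add]; rfl
          by_cases hmn : m = n
          · subst hmn
            rw [hψum, ← algebraMap_smul (R ⧸ M)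
              (MvPolynomial.coeff (Finsupp.single (⟨m, hn⟩ : ℕ+) 1) (u m))
              (DualNumber.eps : A),
              Ideal.Quotient.algebraMap_eq, Ideal.Quotient.eq_zero_iff_mem.mpr hcM,
              zero_smul]
            exact Subalgebra.zero_mem _
          · have hcs : MvPolynomial.coeff
                (Finsupp.single (⟨n, hn⟩ : ℕ+) 1) (u m) = 0 := by
              by_contra h0
              have hw := hhom m h0
              erw [hwsingle] at hw
              exact hmn hw.symm
            rw [hψum, hcs, zero_smul]
            exact Subalgebra.zero_mem _
      have hXmem : ψ (MvPolynomial.X (⟨n, hn⟩ : ℕ+))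
          ∈ (Algebra.adjoin R (Set.range u)).map ψ :=
        ⟨MvPolynomial.X _, by rw [hgen]; trivial, rfl⟩
      rw [AlgHom.map_adjoin] at hXmem
      have hle : Algebra.adjoin R (ψ '' Set.range u) ≤ ⊥ := by
        apply Algebra.adjoin_le
        rintro y ⟨x, ⟨m, rfl⟩, rfl⟩
        exact himg m
      have hbot := hle hXmem
      have hXe : ψ (MvPolynomial.X (⟨n, hn⟩ : ℕ+)) = (DualNumber.eps : A) := by
        rw [hψ]
        show MvPolynomial.aeval _ (MvPolynomial.X _) = _
        erw [MvPolynomial.aeval_X, if_pos rfl]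
      rw [hXe, Algebra.mem_bot] at hbot
      obtain ⟨r, hr⟩ := hbot
      have hsnd := congrArg TrivSqZeroExt.snd hr
      rw [TrivSqZeroExt.algebraMap_eq_inl', TrivSqZeroExt.snd_inl,
        DualNumber.snd_eps] at hsnd
      exact zero_ne_one hsnd
  · intro hunit
    set T := Algebra.adjoin R (Set.range u) with hT
    have hX : ∀ m : ℕ, ∀ i : ℕ+, (i : ℕ) = m → MvPolynomial.X i ∈ T := by
      intro m
      induction m using Nat.strong_induction_on with
      | _ m IH =>
        intro i hi
        have hm1 : 0 < m := by rw [← hi]; exact i.2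
        have hcu := hunit m
        rw [SFAux.hallInner_psum R (u m) m hm1 (hhom m)] at hcu
        have hieq : (⟨m, hm1⟩ : ℕ+) = i := by
          apply PNat.coe_injective
          simp [hi]
        rw [hieq] at hcu
        set c := MvPolynomial.coeff (Finsupp.single i 1) (u m) with hc
        set g := u m - c • MvPolynomial.X i with hg
        have hgsupp : g ∈ MvPolynomial.supported R {j : ℕ+ | (j : ℕ) < m} := by
          rw [MvPolynomial.mem_supported]
          intro j hj
          rw [Finset.mem_coe, MvPolynomial.mem_vars] at hj
          obtain ⟨d, hd, hjd⟩ := hj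
          have hcd : MvPolynomial.coeff d g ≠ 0 := MvPolynomial.mem_support_iff.mp hd
          have hXcoeff : ∀ e, MvPolynomial.coeff e (c • MvPolynomial.X i : SF R)
              = c * (if Finsupp.single i 1 = e then 1 else 0) := by
            intro e
            rw [MvPolynomial.coeff_smul, MvPolynomial.X, MvPolynomial.coeff_monomial]
            rfl
          have hdne : d ≠ Finsupp.single i 1 := by
            rintro rfl
            apply hcd
            rw [hg, MvPolynomial.coeff_sub, hXcoeff, if_pos rfl, mul_one, hc, sub_self]
          have hcdu : MvPolynomial.coeff d (u m) ≠ 0 := by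
            intro h0
            apply hcd
            rw [hg, MvPolynomial.coeff_sub, hXcoeff, if_neg (fun hcon => hdne hcon.symm),
              mul_zero, h0, sub_zero]
          have hw := hhom m hcdu
          have hjle := SFAux.weight_le_of_mem_support hw hjd
          rcases lt_or_eq_of_le hjle with hlt | heq
          · exact hlt
          · exfalso
            apply hdne
            have hd1 := SFAux.eq_single_of_weight_eq hw hjd heq
            have hji : j = i := by
              apply PNat.coe_injective
              rw [heq, hi]
            rw [hd1, hji]
        have hgmem : g ∈ T := by
          have hsub : MvPolynomial.supported R {j : ℕ+ | (j : ℕ) < m} ≤ T := by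
            rw [MvPolynomial.supported_eq_adjoin_X]
            apply Algebra.adjoin_le
            rintro y ⟨j, hjlt, rfl⟩
            exact IH (j : ℕ) hjlt j rfl
          exact hsub hgsupp
        have humem : u m ∈ T := Algebra.subset_adjoin ⟨m, rfl⟩
        have hcXmem : c • MvPolynomial.X i ∈ T := by
          have heq : c • MvPolynomial.X i = u m - g := by
            rw [hg]; ring
          rw [heq]
          exact Subalgebra.sub_mem T humem hgmem
        obtain ⟨v, hv⟩ := hcu
        have hXi : MvPolynomial.X i = (↑v⁻¹ : R) • (c • MvPolynomial.X i : SF R) := by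
          rw [smul_smul, hc]; erw [← hv, Units.inv_mul, one_smul]
        rw [hXi]
        exact Subalgebra.smul_mem T hcXmem _
    rw [hT, eq_top_iff, ← MvPolynomial.adjoin_range_X]
    apply Algebra.adjoin_le
    rintro y ⟨i, rfl⟩
    exact hX (i : ℕ) i rfl
end

section
/- Let λ be a non-rectangular partition of n (i.e., λ is not of the form (a^b)). Then the weighted count of domino tabloids w_{(n)λ} of shape (n) and type λ satisfies w_{(n)λ} ≥ n. -/
open MvPolynomial

private lemma aux_sum_range_getD (L : List ℕ) :
    ∑ k ∈ Finset.range L.length, L.getD k 0 = L.sum := by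
  induction L with
  | nil => simp
  | cons a t ih =>
    rw [List.length_cons, Finset.sum_range_succ']
    simp only [List.getD_cons_succ, List.getD_cons_zero, List.sum_cons, ih]
    omega

private lemma aux_headI_rotate (L : List ℕ) {k : ℕ} (hk : k < L.length) :
    (L.rotate k).headI = L.getD k 0 := by
  rw [List.rotate_eq_drop_append_take hk.le, List.drop_eq_getElem_cons hk,
    List.cons_append, List.headI_cons]
  exact (List.getD_eq_getElem L 0 hk).symm

private lemma aux_dominoW_singleton (n : ℕ) (ty : Multiset ℕ) :
    dominoW {n} ty =
      ∑ c ∈ Finset.univ.filter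
        (fun c : Composition n => ((c.blocks : Multiset ℕ) = ty)), c.blocks.headI := by
  have hs : sortedDesc ({n} : Multiset ℕ) = [n] := by
    simp [sortedDesc]
  unfold dominoW
  generalize hgen : sortedDesc ({n} : Multiset ℕ) = l
  rw [hgen] at hs
  subst hs
  have hi0 : (0 : ℕ) < ([n] : List ℕ).length := by simp
  have huniv : (Finset.univ : Finset (Fin ([n] : List ℕ).length)) = {⟨0, hi0⟩} := by
    refine Finset.ext fun a => ?_
    simp only [Finset.mem_univ, Finset.mem_singleton, true_iff]
    refine Fin.ext ?_
    have h1 := a.isLt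
    simp only [List.length_singleton] at h1
    show a.val = 0
    omega
  let e : ((i : Fin ([n] : List ℕ).length) → Composition (([n] : List ℕ).get i)) ≃
      Composition n :=
    { toFun := fun T => T ⟨0, hi0⟩
      invFun := fun c i => match i with
        | ⟨0, _⟩ => c
        | ⟨k+1, h⟩ => absurd h (by simp)
      left_inv := fun T => by
        funext i
        match i with
        | ⟨0, _⟩ => rfl
        | ⟨k+1, h⟩ => exact absurd h (by simp)
      right_inv := fun c => rfl }
  rw [Finset.sum_filter, Finset.sum_filter]
  refine Fintype.sum_equiv e _ _ (fun T => ?_)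
  rw [huniv, Finset.sum_singleton, Finset.prod_singleton]
  simp only [e, Equiv.coe_fn_mk]

private lemma aux_rotate_inj (L : List ℕ) (hs : L.Pairwise (fun a b => b ≤ a))
    (hnc : ¬∃ a, L = List.replicate L.length a)
    {k m : ℕ} (hk : k < L.length) (hm : m < L.length)
    (h : L.rotate k = L.rotate m) : k = m := by
  by_contra hne
  wlog hlt : k < m generalizing k m
  · exact this hm hk h.symm (Ne.symm hne) (by omega)
  obtain ⟨ℓ, hℓ⟩ : ∃ ℓ, L.length = ℓ := ⟨L.length, rfl⟩
  rw [hℓ] at hk hm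
  have hℓpos : 0 < ℓ := by omega
  have hrot : L.rotate ℓ = L := by rw [← hℓ]; exact List.rotate_length L
  have hd : L.rotate (k + (ℓ - m)) = L := by
    have h2 := congrArg (fun l => List.rotate l (ℓ - m)) h
    simp only [List.rotate_rotate] at h2
    rw [show m + (ℓ - m) = ℓ by omega, hrot] at h2
    exact h2
  obtain ⟨d, hdd⟩ : ∃ d, d = k + (ℓ - m) := ⟨_, rfl⟩
  rw [← hdd] at hd
  have hd0 : 0 < d := by omega
  have hdℓ : d < ℓ := by omega
  have he : L.rotate (ℓ - d) = L := by
    have h2 := congrArg (fun l => List.rotate l (ℓ - d)) hd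
    simp only [List.rotate_rotate] at h2
    rw [show d + (ℓ - d) = ℓ by omega, hrot] at h2
    exact h2.symm
  have hpw := List.pairwise_iff_getElem.1 hs
  have hmono : ∀ i j, i < j → j < ℓ → L.getD j 0 ≤ L.getD i 0 := by
    intro i j hij hj
    rw [List.getD_eq_getElem L 0 (by omega), List.getD_eq_getElem L 0 (by omega)]
    exact hpw i j (by omega) (by omega) hij
  have hgetD : ∀ i, L.getD i 0 = (L[i]?).getD 0 := fun i => List.getD_eq_getElem?_getD
  have hA : L.getD (ℓ - 1) 0 = L.getD (d - 1) 0 := by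
    have hmod : (ℓ - 1 + d) % L.length = d - 1 := by
      rw [hℓ, Nat.mod_eq_sub_mod (by omega), show ℓ - 1 + d - ℓ = d - 1 by omega,
        Nat.mod_eq_of_lt (by omega)]
    have h1 : L[ℓ - 1]? = L[d - 1]? := by
      conv_lhs => rw [← hd]
      rw [List.getElem?_rotate (by omega), hmod]
    rw [hgetD, hgetD, h1]
  have hB : L.getD d 0 = L.getD 0 0 := by
    have hmod : (d + (ℓ - d)) % L.length = 0 := by
      rw [hℓ, show d + (ℓ - d) = ℓ by omega, Nat.mod_self]
    have h1 : L[d]? = L[0]? := by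
      conv_lhs => rw [← he]
      rw [List.getElem?_rotate (by omega), hmod]
    rw [hgetD, hgetD, h1]
  have h1 : L.getD d 0 ≤ L.getD (d - 1) 0 := hmono (d - 1) d (by omega) (by omega)
  have hall : ∀ i, i < ℓ → L.getD i 0 = L.getD 0 0 := by
    intro i hi
    rcases Nat.eq_zero_or_pos i with rfl | hi0
    · rfl
    have u1 := hmono 0 i hi0 hi
    have u2 : L.getD (ℓ - 1) 0 ≤ L.getD i 0 := by
      rcases Nat.lt_or_ge i (ℓ - 1) with h' | h'
      · exact hmono i (ℓ - 1) h' (by omega)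
      · have : i = ℓ - 1 := by omega
        rw [this]
    have u3 := hmono 0 (ℓ - 1) (by omega) (by omega)
    omega
  refine hnc ⟨L.getD 0 0, List.ext_getElem (by simp) fun i hh1 hh2 => ?_⟩
  rw [List.getElem_replicate, ← List.getD_eq_getElem L 0 hh1]
  exact hall i (by omega)

/-- If `λ ⊢ n` is not rectangular (not of the form `(a^b)`), then the
weighted count of domino tabloids of shape `(n)` and type `λ` is at least `n`. -/
theorem stmt7 {n : ℕ} (lam : Nat.Partition n)
    (hrect : ¬∃ a b : ℕ, 0 < a ∧ 0 < b ∧ lam.parts = Multiset.replicate b a) :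
    n ≤ dominoW {n} lam.parts := by
  rcases Nat.eq_zero_or_pos n with hn | hn
  · subst hn; exact Nat.zero_le _
  classical
  set L := sortedDesc lam.parts with hL
  have hcoe : (L : Multiset ℕ) = lam.parts := by
    rw [hL, sortedDesc, Multiset.coe_reverse, Multiset.sort_eq]
  have hsum : L.sum = n := by
    have : (L : Multiset ℕ).sum = lam.parts.sum := by rw [hcoe]
    simpa [lam.parts_sum] using this
  have hlen : 0 < L.length := by
    rcases L with _ | ⟨a, t⟩
    · simp at hsum; omega
    · simp
  have hpos : ∀ x ∈ L, 0 < x := by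
    intro x hx
    exact lam.parts_pos (by rw [← hcoe]; exact_mod_cast hx)
  have hsorted : L.Pairwise (fun a b => b ≤ a) := by
    rw [hL, sortedDesc, List.pairwise_reverse]
    exact Multiset.pairwise_sort _ _
  have hnc : ¬∃ a, L = List.replicate L.length a := by
    rintro ⟨a, ha⟩
    have haL : a ∈ L := ha ▸ List.mem_replicate.mpr ⟨by omega, rfl⟩
    exact hrect ⟨a, L.length, hpos a haL, hlen, by
      rw [← hcoe, ha]; simp [Multiset.coe_replicate]⟩
  -- the compositions obtained by rotating L
  have hrotsum : ∀ k, (L.rotate k).sum = n := fun k =>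
    ((L.rotate_perm k).sum_eq).trans hsum
  let f : ℕ → Composition n := fun k =>
    ⟨L.rotate k, fun {i} hi => hpos i (List.mem_rotate.1 hi), hrotsum k⟩
  have hfinj : ∀ x ∈ Finset.range L.length, ∀ y ∈ Finset.range L.length,
      f x = f y → x = y := by
    intro x hx y hy hxy
    exact aux_rotate_inj L hsorted hnc (Finset.mem_range.1 hx) (Finset.mem_range.1 hy)
      (congrArg Composition.blocks hxy)
  have hsub : (Finset.range L.length).image f ⊆
      Finset.univ.filter (fun c : Composition n => ((c.blocks : Multiset ℕ) = lam.parts)) := by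
    intro c hc
    rcases Finset.mem_image.1 hc with ⟨k, _, rfl⟩
    refine Finset.mem_filter.2 ⟨Finset.mem_univ _, ?_⟩
    show ((L.rotate k : List ℕ) : Multiset ℕ) = lam.parts
    rw [← hcoe]
    exact Quot.sound (L.rotate_perm k)
  calc n = ∑ k ∈ Finset.range L.length, L.getD k 0 := by rw [aux_sum_range_getD L, hsum]
    _ = ∑ k ∈ Finset.range L.length, (f k).blocks.headI := by
        refine Finset.sum_congr rfl (fun k hk => ?_)
        exact (aux_headI_rotate L (Finset.mem_range.1 hk)).symm
    _ = ∑ c ∈ (Finset.range L.length).image f, c.blocks.headI := by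
        rw [Finset.sum_image hfinj]
    _ ≤ ∑ c ∈ Finset.univ.filter
          (fun c : Composition n => ((c.blocks : Multiset ℕ) = lam.parts)),
          c.blocks.headI := Finset.sum_le_sum_of_subset hsub
    _ = dominoW {n} lam.parts := (aux_dominoW_singleton n lam.parts).symm
end

section
/- Let ξ, λ be partitions of n and η, μ be partitions of m. Then the domino-tabloid weight counts satisfy the supermultiplicativity w_{(ξ∪η)(λ∪μ)} ≥ w_{ξλ} · w_{ημ}, where ξ∪η denotes the partition obtained by merging the parts of ξ and η in weakly decreasing order. -/
open MvPolynomial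

section Aux9
open Finset

/-- Generalized domino weight over an arbitrary list of row lengths. -/
private def W9 (l : List ℕ) (ty : Multiset ℕ) : ℕ :=
  ∑ T ∈ Finset.univ.filter
      (fun T : ∀ i : Fin l.length, Composition (l.get i) =>
        (∑ i, ((T i).blocks : Multiset ℕ)) = ty),
    ∏ i, (T i).blocks.headI

@[simp] private lemma cast_blocks9 {a b : ℕ} (h : a = b) (c : Composition a) :
    ((Equiv.cast (congrArg Composition h)) c).blocks = c.blocks := by subst h; rfl

private lemma exists_equiv_of_perm9 {l l' : List ℕ} (h : l.Perm l') :
    ∃ e : Fin l.length ≃ Fin l'.length, ∀ i, l'.get (e i) = l.get i := by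
  induction h with
  | nil => exact ⟨Equiv.refl _, fun i => i.elim0⟩
  | cons x h ih =>
      obtain ⟨e, he⟩ := ih
      refine ⟨(finSuccEquiv _).trans ((Equiv.optionCongr e).trans (finSuccEquiv _).symm),
        fun i => ?_⟩
      refine Fin.cases ?_ (fun j => ?_) i
      · simp
      · simpa using he j
  | swap x y l =>
      refine ⟨Equiv.swap ⟨0, by simp⟩ ⟨1, by simp⟩, fun i => ?_⟩
      rcases i with ⟨iv, hiv⟩
      match iv with
      | 0 => simp [Equiv.swap_apply_def]
      | 1 => simp [Equiv.swap_apply_def]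
      | (k+2) => simp [Equiv.swap_apply_def, Fin.ext_iff]
  | trans h1 h2 ih1 ih2 =>
      obtain ⟨e1, he1⟩ := ih1
      obtain ⟨e2, he2⟩ := ih2
      exact ⟨e1.trans e2, fun i => (he2 (e1 i)).trans (he1 i)⟩

private lemma W9_perm {l l' : List ℕ} (h : l.Perm l') (ty : Multiset ℕ) :
    W9 l ty = W9 l' ty := by
  classical
  obtain ⟨e, he⟩ := exists_equiv_of_perm9 h
  let E : (∀ i : Fin l.length, Composition (l.get i)) ≃
      (∀ j : Fin l'.length, Composition (l'.get j)) :=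
    Equiv.piCongr e (fun i => Equiv.cast (congrArg Composition (he i).symm))
  unfold W9
  rw [Finset.sum_filter, Finset.sum_filter]
  refine Fintype.sum_equiv E _ _ (fun T => ?_)
  have hval : ∀ a, (E T (e a)).blocks = (T a).blocks := by
    intro a
    rw [Equiv.piCongr_apply_apply]
    exact cast_blocks9 (he a).symm (T a)
  have hsum : (∑ j, ((E T j).blocks : Multiset ℕ)) = ∑ i, ((T i).blocks : Multiset ℕ) := by
    rw [← Equiv.sum_comp e (fun j => ((E T j).blocks : Multiset ℕ))]
    exact Finset.sum_congr rfl fun a _ => by rw [hval a]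
  have hprod : (∏ j, (E T j).blocks.headI) = ∏ i, (T i).blocks.headI := by
    rw [← Equiv.prod_comp e (fun j => (E T j).blocks.headI)]
    exact Finset.prod_congr rfl fun a _ => by rw [hval a]
  rw [hsum, hprod]

private def glue9 (l1 l2 : List ℕ)
    (T : ∀ i : Fin l1.length, Composition (l1.get i))
    (S : ∀ i : Fin l2.length, Composition (l2.get i)) :
    ∀ j : Fin (l1 ++ l2).length, Composition ((l1 ++ l2).get j) :=
  fun j =>
    if h : (j : ℕ) < l1.length then
      Equiv.cast (congrArg Composition
        (by simp only [List.get_eq_getElem]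
            exact (List.getElem_append_left h (h' := j.isLt)).symm :
          l1.get ⟨j, h⟩ = (l1 ++ l2).get j)) (T ⟨j, h⟩)
    else
      Equiv.cast (congrArg Composition
        (by simp only [List.get_eq_getElem]
            exact (List.getElem_append_right (le_of_not_gt h) (h₂ := j.isLt)).symm :
          l2.get ⟨(j : ℕ) - l1.length, by
            have := j.isLt; simp [List.length_append] at this; omega⟩ = (l1 ++ l2).get j))
        (S ⟨(j : ℕ) - l1.length, by
            have := j.isLt; simp [List.length_append] at this; omega⟩)

private lemma glue9_blocks_left {l1 l2 : List ℕ}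
    {T : ∀ i : Fin l1.length, Composition (l1.get i)}
    {S : ∀ i : Fin l2.length, Composition (l2.get i)}
    (i : Fin l1.length) (hj : (i : ℕ) < (l1 ++ l2).length) :
    (glue9 l1 l2 T S ⟨i, hj⟩).blocks = (T i).blocks := by
  simp only [glue9]
  rw [dif_pos (show ((⟨(i : ℕ), hj⟩ : Fin (l1 ++ l2).length) : ℕ) < l1.length from i.isLt)]
  rw [cast_blocks9]
  simp only [List.get_eq_getElem]
  exact (List.getElem_append_left i.isLt).symm

private lemma glue9_blocks_right {l1 l2 : List ℕ}
    {T : ∀ i : Fin l1.length, Composition (l1.get i)}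
    {S : ∀ i : Fin l2.length, Composition (l2.get i)}
    (i : Fin l2.length) (hj : l1.length + (i : ℕ) < (l1 ++ l2).length) :
    (glue9 l1 l2 T S ⟨l1.length + i, hj⟩).blocks = (S i).blocks := by
  simp only [glue9]
  rw [dif_neg (Nat.not_lt.2 (Nat.le_add_right _ _))]
  have hfin : (⟨l1.length + (i : ℕ) - l1.length, by
      have := hj; simp [List.length_append] at this; omega⟩ : Fin l2.length) = i := by
    ext; simp
  rw [cast_blocks9]
  · rw [hfin]
  · simp only [List.get_eq_getElem]
    exact (List.getElem_append_right (Nat.le_add_right _ _)).symm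

private lemma sum_split9 {M : Type*} [AddCommMonoid M] (l1 l2 : List ℕ)
    (f : Fin (l1 ++ l2).length → M) :
    ∑ j, f j = (∑ i : Fin l1.length, f ⟨i, by simp only [List.length_append]; omega⟩)
      + ∑ i : Fin l2.length, f ⟨l1.length + i, by simp only [List.length_append]; omega⟩ := by
  have h1 : ∑ j, f j = ∑ k : Fin (l1.length + l2.length),
      f (finCongr (@List.length_append _ l1 l2).symm k) :=
    (Fintype.sum_equiv (finCongr (@List.length_append _ l1 l2).symm) _ f (fun k => rfl)).symm
  rw [h1, Fin.sum_univ_add]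
  congr 1 <;> exact Finset.sum_congr rfl (fun i _ => congrArg f (by ext; simp))

private lemma prod_split9 {M : Type*} [CommMonoid M] (l1 l2 : List ℕ)
    (f : Fin (l1 ++ l2).length → M) :
    ∏ j, f j = (∏ i : Fin l1.length, f ⟨i, by simp only [List.length_append]; omega⟩)
      * ∏ i : Fin l2.length, f ⟨l1.length + i, by simp only [List.length_append]; omega⟩ := by
  have h1 : ∏ j, f j = ∏ k : Fin (l1.length + l2.length),
      f (finCongr (@List.length_append _ l1 l2).symm k) :=
    (Fintype.prod_equiv (finCongr (@List.length_append _ l1 l2).symm) _ f (fun k => rfl)).symm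
  rw [h1, Fin.prod_univ_add]
  congr 1 <;> exact Finset.prod_congr rfl (fun i _ => congrArg f (by ext; simp))

private lemma W9_append (l1 l2 : List ℕ) (t1 t2 : Multiset ℕ) :
    W9 l1 t1 * W9 l2 t2 ≤ W9 (l1 ++ l2) (t1 + t2) := by
  classical
  unfold W9
  rw [Finset.sum_mul_sum, ← Finset.sum_product']
  set P := (Finset.univ.filter
      (fun T : ∀ i : Fin l1.length, Composition (l1.get i) =>
        (∑ i, ((T i).blocks : Multiset ℕ)) = t1)) ×ˢ
    (Finset.univ.filter
      (fun S : ∀ i : Fin l2.length, Composition (l2.get i) =>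
        (∑ i, ((S i).blocks : Multiset ℕ)) = t2)) with hP
  have hinj : ∀ p ∈ P, ∀ q ∈ P,
      glue9 l1 l2 p.1 p.2 = glue9 l1 l2 q.1 q.2 → p = q := by
    rintro ⟨T, S⟩ - ⟨T', S'⟩ - hEq
    have hT : T = T' := by
      funext i
      have hj : (i : ℕ) < (l1 ++ l2).length := by simp only [List.length_append]; omega
      have := congrFun hEq ⟨i, hj⟩
      simp only [glue9] at this
      rw [dif_pos (show ((⟨(i : ℕ), hj⟩ : Fin (l1 ++ l2).length) : ℕ) < l1.length from i.isLt),
        dif_pos (show ((⟨(i : ℕ), hj⟩ : Fin (l1 ++ l2).length) : ℕ) < l1.length from i.isLt)]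
        at this
      exact (Equiv.cast _).injective this
    have hS : S = S' := by
      funext i
      have hj : l1.length + (i : ℕ) < (l1 ++ l2).length := by
        simp only [List.length_append]; omega
      have := congrFun hEq ⟨l1.length + i, hj⟩
      simp only [glue9] at this
      rw [dif_neg (Nat.not_lt.2 (Nat.le_add_right _ _) :
          ¬ ((⟨l1.length + (i : ℕ), hj⟩ : Fin (l1 ++ l2).length) : ℕ) < l1.length),
        dif_neg (Nat.not_lt.2 (Nat.le_add_right _ _) :
          ¬ ((⟨l1.length + (i : ℕ), hj⟩ : Fin (l1 ++ l2).length) : ℕ) < l1.length)]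
        at this
      have h2 := (Equiv.cast _).injective this
      have hfin : (⟨l1.length + (i : ℕ) - l1.length, by
          have := hj; simp [List.length_append] at this; omega⟩ : Fin l2.length) = i := by
        ext; simp
      rwa [hfin] at h2
    simp [Prod.ext_iff, hT, hS]
  calc ∑ p ∈ P, (∏ i, (p.1 i).blocks.headI) * ∏ i, (p.2 i).blocks.headI
      = ∑ U ∈ P.image (fun p => glue9 l1 l2 p.1 p.2), ∏ j, (U j).blocks.headI := by
        rw [Finset.sum_image hinj]
        refine Finset.sum_congr rfl fun p hp => ?_
        rw [prod_split9 l1 l2]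
        congr 1
        · exact Finset.prod_congr rfl fun i _ => by rw [glue9_blocks_left]
        · exact Finset.prod_congr rfl fun i _ => by rw [glue9_blocks_right]
    _ ≤ _ := by
        apply Finset.sum_le_sum_of_subset
        intro U hU
        simp only [Finset.mem_image] at hU
        obtain ⟨⟨T, S⟩, hp, rfl⟩ := hU
        rw [hP, Finset.mem_product, Finset.mem_filter, Finset.mem_filter] at hp
        obtain ⟨⟨-, h1⟩, -, h2⟩ := hp
        rw [Finset.mem_filter]
        refine ⟨Finset.mem_univ _, ?_⟩
        rw [sum_split9 l1 l2]
        rw [← h1, ← h2]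
        congr 1
        · exact Finset.sum_congr rfl fun i _ => by rw [glue9_blocks_left]
        · exact Finset.sum_congr rfl fun i _ => by rw [glue9_blocks_right]


end Aux9

/-- Supermultiplicativity of domino tabloid counts:
`w_{(ξ∪η)(λ∪μ)} ≥ w_{ξλ} · w_{ημ}`. -/
theorem stmt9 {n m : ℕ} (xi lam : Nat.Partition n) (eta mu : Nat.Partition m) :
    dominoW xi.parts lam.parts * dominoW eta.parts mu.parts ≤
      dominoW (xi.parts + eta.parts) (lam.parts + mu.parts) := by
  have hco : ∀ s : Multiset ℕ, ((sortedDesc s : List ℕ) : Multiset ℕ) = s := by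
    intro s
    simp [sortedDesc, Multiset.coe_reverse, Multiset.sort_eq]
  have hperm : (sortedDesc xi.parts ++ sortedDesc eta.parts).Perm
      (sortedDesc (xi.parts + eta.parts)) := by
    rw [← Multiset.coe_eq_coe, ← Multiset.coe_add, hco, hco, hco]
  calc dominoW xi.parts lam.parts * dominoW eta.parts mu.parts
      = W9 (sortedDesc xi.parts) lam.parts * W9 (sortedDesc eta.parts) mu.parts := rfl
    _ ≤ W9 (sortedDesc xi.parts ++ sortedDesc eta.parts) (lam.parts + mu.parts) :=
        W9_append _ _ _ _
    _ = W9 (sortedDesc (xi.parts + eta.parts)) (lam.parts + mu.parts) :=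
        W9_perm hperm _
    _ = dominoW (xi.parts + eta.parts) (lam.parts + mu.parts) := rfl
end
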